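/- For a product ensemble E = ⊗_l E^l, any x⃗, and any E ∈ M_x⃗(E), the compression Π E Π is invariant under conjugation by ⊗_l Π_{x_l}^⊥: (⊗_l Π_{x_l}^⊥) (Π E Π) (⊗_l Π_{x_l}^⊥) = Π E Π, where Π is the projection onto the support of ρ₀ = ⊗_l ρ₀^l and Π_{x_l}^⊥ is the projection onto the kernel of C_{x_l}(E^l) ρ₀^l − η_{x_l}^l ρ_{x_l}^l. -/

import Mathlib

open Matrix BigOperators
open scoped ComplexOrder

/-- L-fold tensor (Kronecker) product of square complex matrices, realized on the
index type ∀ l, Fin (d l). -/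
def tens {L : ℕ} {d : Fin L → ℕ}
    (X : ∀ l, Matrix (Fin (d l)) (Fin (d l)) ℂ) :
    Matrix (∀ l, Fin (d l)) (∀ l, Fin (d l)) ℂ :=
  Matrix.of fun a b => ∏ l, X l (a l) (b l)

open scoped MatrixOrder in
theorem Matrix.posSemidef_iff_eq_transpose_mul_self {m : Type*} [Fintype m] [DecidableEq m]
    {A : Matrix m m ℂ} : A.PosSemidef ↔ ∃ B : Matrix m m ℂ, A = Bᴴ * B := by
  constructor
  · intro hA
    obtain ⟨X, hX, -, hXX⟩ :=
      CFC.exists_sqrt_of_isSelfAdjoint_of_quasispectrumRestricts hA.isHermitian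
        (QuasispectrumRestricts.nnreal_of_nonneg hA.nonneg)
    have hXH : Xᴴ = X := hX
    exact ⟨X, by rw [hXH, hXX]⟩
  · rintro ⟨B, rfl⟩
    exact Matrix.posSemidef_conjTranspose_mul_self B

section matrixAux

variable {m : Type*} [Fintype m] [DecidableEq m]

lemma ext_mulVec' {A B : Matrix m m ℂ} (h : ∀ v, A *ᵥ v = B *ᵥ v) : A = B := by
  ext i j
  simpa using congrFun (h (Pi.single j 1)) i

lemma exists_left_factor {X Y : Matrix m m ℂ}
    (h : LinearMap.ker X.mulVecLin ≤ LinearMap.ker Y.mulVecLin) :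
    ∃ R : Matrix m m ℂ, Y = R * X := by
  set f := X.mulVecLin with hf
  set g := Y.mulVecLin with hg
  obtain ⟨s, hs⟩ := f.rangeRestrict.exists_rightInverse_of_surjective
    (LinearMap.range_eq_top.2 f.surjective_rangeRestrict)
  obtain ⟨W, hW⟩ := (LinearMap.range f).exists_isCompl
  set π := (LinearMap.range f).linearProjOfIsCompl W hW with hπ
  set h' : (m → ℂ) →ₗ[ℂ] (m → ℂ) := g ∘ₗ (s ∘ₗ (π : (m → ℂ) →ₗ[ℂ] LinearMap.range f)) with hh'
  have hcomp : h' ∘ₗ f = g := by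
    refine LinearMap.ext fun v => ?_
    have h1 : π (f v) = f.rangeRestrict v :=
      Submodule.linearProjOfIsCompl_apply_left hW (f.rangeRestrict v)
    have h2 : f (s (f.rangeRestrict v)) = f v := by
      have := congrArg Subtype.val (LinearMap.congr_fun hs (f.rangeRestrict v))
      simpa using this
    have h3 : s (f.rangeRestrict v) - v ∈ LinearMap.ker g := by
      apply h
      simp [LinearMap.mem_ker, map_sub, h2]
    have h4 : g (s (f.rangeRestrict v)) = g v := by
      have := h3
      rw [LinearMap.mem_ker, map_sub, sub_eq_zero] at this
      exact this
    simp [hh', h1, h4]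
  refine ⟨LinearMap.toMatrix' h', Matrix.toLin'.injective ?_⟩
  rw [Matrix.toLin'_mul, Matrix.toLin'_toMatrix']
  rw [Matrix.toLin'_apply', Matrix.toLin'_apply', ← hf, ← hg, hcomp]

lemma trace_conjTranspose_mul_self_nonneg (Z : Matrix m m ℂ) : 0 ≤ (Zᴴ * Z).trace := by
  rw [Matrix.trace]
  apply Finset.sum_nonneg
  intro j _
  rw [Matrix.diag_apply, Matrix.mul_apply]
  apply Finset.sum_nonneg
  intro i _
  simpa [Matrix.conjTranspose_apply] using star_mul_self_nonneg (Z i j)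

lemma eq_zero_of_trace_conjTranspose_mul_self (Z : Matrix m m ℂ)
    (h : (Zᴴ * Z).trace = 0) : Z = 0 := by
  have h' : ∑ j, ∑ i, star (Z i j) * Z i j = 0 := by
    simpa [Matrix.trace, Matrix.diag_apply, Matrix.mul_apply, Matrix.conjTranspose_apply] using h
  ext i j
  have hnn : ∀ j0 ∈ Finset.univ (α := m), 0 ≤ ∑ i, star (Z i j0) * Z i j0 := by
    intro j0 _
    exact Finset.sum_nonneg fun i _ => star_mul_self_nonneg (Z i j0)
  have hj := (Finset.sum_eq_zero_iff_of_nonneg hnn).1 h' j (Finset.mem_univ j)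
  have hnn2 : ∀ i0 ∈ Finset.univ (α := m), 0 ≤ star (Z i0 j) * Z i0 j := by
    intro i0 _; exact star_mul_self_nonneg (Z i0 j)
  have hij := (Finset.sum_eq_zero_iff_of_nonneg hnn2).1 hj i (Finset.mem_univ i)
  have hz : Z i j * star (Z i j) = 0 := by rw [mul_comm]; exact hij
  rw [Complex.star_def, Complex.mul_conj] at hz
  have : Complex.normSq (Z i j) = 0 := by exact_mod_cast hz
  simpa using Complex.normSq_eq_zero.mp this

lemma trace_cycle_key (S T : Matrix m m ℂ) :
    (Sᴴ * S * (Tᴴ * T)).trace = ((S * Tᴴ)ᴴ * (S * Tᴴ)).trace := by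
  rw [Matrix.conjTranspose_mul, Matrix.conjTranspose_conjTranspose]
  rw [show T * Sᴴ * (S * Tᴴ) = T * (Sᴴ * S * Tᴴ) by noncomm_ring,
    Matrix.trace_mul_comm T (Sᴴ * S * Tᴴ),
    show Sᴴ * S * Tᴴ * T = Sᴴ * S * (Tᴴ * T) by noncomm_ring]

lemma trace_mul_psd_nonneg {M N : Matrix m m ℂ} (hM : M.PosSemidef) (hN : N.PosSemidef) :
    0 ≤ (M * N).trace := by
  obtain ⟨S, rfl⟩ := Matrix.posSemidef_iff_eq_transpose_mul_self.mp hM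
  obtain ⟨T, rfl⟩ := Matrix.posSemidef_iff_eq_transpose_mul_self.mp hN
  have key := trace_cycle_key S T
  rw [key]
  exact trace_conjTranspose_mul_self_nonneg _

lemma mul_eq_zero_of_trace_mul_psd {M N : Matrix m m ℂ} (hM : M.PosSemidef) (hN : N.PosSemidef)
    (h : (M * N).trace = 0) : M * N = 0 := by
  obtain ⟨S, rfl⟩ := Matrix.posSemidef_iff_eq_transpose_mul_self.mp hM
  obtain ⟨T, rfl⟩ := Matrix.posSemidef_iff_eq_transpose_mul_self.mp hN
  have key := trace_cycle_key S T
  have hST : S * Tᴴ = 0 := by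
    apply eq_zero_of_trace_conjTranspose_mul_self
    rw [← key, h]
  calc Sᴴ * S * (Tᴴ * T) = Sᴴ * (S * Tᴴ) * T := by noncomm_ring
    _ = 0 := by rw [hST]; simp

lemma smul_posSemidef {r : ℝ} (hr : 0 ≤ r) {M : Matrix m m ℂ} (hM : M.PosSemidef) :
    ((r : ℂ) • M).PosSemidef := by
  refine Matrix.PosSemidef.of_dotProduct_mulVec_nonneg ?_ ?_
  · unfold Matrix.IsHermitian
    rw [Matrix.conjTranspose_smul, hM.1]
    simp
  · intro v
    rw [Matrix.smul_mulVec, dotProduct_smul, smul_eq_mul]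
    exact mul_nonneg (by exact_mod_cast hr) (hM.dotProduct_mulVec_nonneg v)

end matrixAux

section tensAux

variable {L : ℕ} {d : Fin L → ℕ}

lemma tens_congr {X Y : ∀ l, Matrix (Fin (d l)) (Fin (d l)) ℂ} (h : ∀ l, X l = Y l) :
    tens X = tens Y :=
  congrArg tens (funext h)

lemma tens_mul (X Y : ∀ l, Matrix (Fin (d l)) (Fin (d l)) ℂ) :
    tens X * tens Y = tens (fun l => X l * Y l) := by
  ext a b
  classical
  simp only [Matrix.mul_apply, tens, Matrix.of_apply]
  rw [Fintype.prod_sum (fun l j => X l (a l) j * Y l j (b l))]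
  exact Finset.sum_congr rfl fun c _ => (Finset.prod_mul_distrib).symm

lemma tens_one : tens (fun l => (1 : Matrix (Fin (d l)) (Fin (d l)) ℂ)) = 1 := by
  ext a b
  simp only [tens, Matrix.of_apply, Matrix.one_apply]
  by_cases h : a = b
  · subst h; simp
  · rw [if_neg h]
    obtain ⟨l, hl⟩ := Function.ne_iff.mp h
    exact Finset.prod_eq_zero (Finset.mem_univ l) (by simp [hl])

lemma tens_conjTranspose (X : ∀ l, Matrix (Fin (d l)) (Fin (d l)) ℂ) :
    (tens X)ᴴ = tens (fun l => (X l)ᴴ) := by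
  ext a b
  simp only [tens, Matrix.conjTranspose_apply, Matrix.of_apply]
  rw [star_prod]

lemma tens_smul (c : Fin L → ℂ) (X : ∀ l, Matrix (Fin (d l)) (Fin (d l)) ℂ) :
    tens (fun l => c l • X l) = (∏ l, c l) • tens X := by
  ext a b
  simp only [tens, Matrix.of_apply, Matrix.smul_apply, smul_eq_mul]
  rw [← Finset.prod_mul_distrib]

lemma tens_slot_sub [DecidableEq (Fin L)] (X Y : ∀ l, Matrix (Fin (d l)) (Fin (d l)) ℂ)
    (l : Fin L) (hagree : ∀ k, k ≠ l → X k = Y k) :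
    tens X - tens Y = tens (fun k => if k = l then X k - Y k else X k) := by
  ext a b
  simp only [Matrix.sub_apply, tens, Matrix.of_apply]
  rw [← Finset.mul_prod_erase Finset.univ (fun k => X k (a k) (b k)) (Finset.mem_univ l),
    ← Finset.mul_prod_erase Finset.univ (fun k => Y k (a k) (b k)) (Finset.mem_univ l),
    ← Finset.mul_prod_erase Finset.univ
      (fun k => (if k = l then X k - Y k else X k) (a k) (b k)) (Finset.mem_univ l)]
  have h1 : ∀ k ∈ Finset.univ.erase l, Y k (a k) (b k) = X k (a k) (b k) := by
    intro k hk
    rw [hagree k (Finset.mem_erase.mp hk).1]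
  have h2 : ∀ k ∈ Finset.univ.erase l,
      (if k = l then X k - Y k else X k) (a k) (b k) = X k (a k) (b k) := by
    intro k hk
    rw [if_neg (Finset.mem_erase.mp hk).1]
  rw [Finset.prod_congr rfl h1, Finset.prod_congr rfl h2, if_pos rfl, Matrix.sub_apply, sub_mul]

lemma tens_posSemidef {X : ∀ l, Matrix (Fin (d l)) (Fin (d l)) ℂ}
    (hX : ∀ l, (X l).PosSemidef) : (tens X).PosSemidef := by
  choose B hB using fun l => Matrix.posSemidef_iff_eq_transpose_mul_self.mp (hX l)
  have : tens X = (tens B)ᴴ * tens B := by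
    rw [tens_conjTranspose, tens_mul]
    exact tens_congr hB
  rw [this]
  exact Matrix.posSemidef_conjTranspose_mul_self _

end tensAux
lemma tens_telescope {L : ℕ} {d : Fin L → ℕ}
    (a bb : ∀ l, Matrix (Fin (d l)) (Fin (d l)) ℂ) :
    tens a - tens bb = ∑ l : Fin L, tens (fun k => if k = l then a k - bb k
      else if (k : ℕ) < (l : ℕ) then bb k else a k) := by
  classical
  set G : ℕ → Matrix (∀ l, Fin (d l)) (∀ l, Fin (d l)) ℂ :=
    fun j => tens (fun k => if (k : ℕ) < j then bb k else a k) with hG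
  have hsplit : ∀ l : Fin L, G (l : ℕ) - G ((l : ℕ) + 1) =
      tens (fun k => if k = l then a k - bb k
        else if (k : ℕ) < (l : ℕ) then bb k else a k) := by
    intro l
    simp only [hG]
    rw [tens_slot_sub _ _ l (fun k hk => by
      have hkl : (k : ℕ) ≠ (l : ℕ) := fun h => hk (Fin.ext h)
      by_cases h : (k : ℕ) < (l : ℕ)
      · rw [if_pos h, if_pos (Nat.lt_succ_of_lt h)]
      · rw [if_neg h, if_neg (by omega)])]
    apply tens_congr
    intro k
    by_cases hk : k = l
    · rw [if_pos hk, if_pos hk]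
      have hkl : (k : ℕ) = (l : ℕ) := by rw [hk]
      rw [if_neg (by omega), if_pos (by omega)]
    · rw [if_neg hk, if_neg hk]
  have h0 : G 0 = tens a := by
    simp only [hG]
    exact tens_congr fun k => if_neg (Nat.not_lt_zero _)
  have hL : G L = tens bb := by
    simp only [hG]
    exact tens_congr fun k => if_pos k.isLt
  calc tens a - tens bb = G 0 - G L := by rw [h0, hL]
    _ = ∑ i ∈ Finset.range L, (G i - G (i + 1)) := (Finset.sum_range_sub' G L).symm
    _ = ∑ l : Fin L, (G (l : ℕ) - G ((l : ℕ) + 1)) :=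
        (Fin.sum_univ_eq_sum_range (fun i => G i - G (i + 1)) L).symm
    _ = _ := Finset.sum_congr rfl fun l _ => hsplit l
lemma key_lemma {L : ℕ} {d : Fin L → ℕ}
    (a bb P Q : ∀ l, Matrix (Fin (d l)) (Fin (d l)) ℂ)
    (hbpsd : ∀ l, (bb l).PosSemidef)
    (hApsd : ∀ l, (a l - bb l).PosSemidef)
    (haP : ∀ l, a l * P l = a l) (hbP : ∀ l, bb l * P l = bb l)
    (hPidem : ∀ l, P l * P l = P l) (hPherm : ∀ l, (P l).IsHermitian)
    (hQherm : ∀ l, (Q l).IsHermitian)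
    (hfac1 : ∀ l, ∃ R : Matrix (Fin (d l)) (Fin (d l)) ℂ, P l = R * a l)
    (hfac2 : ∀ l, ∃ R : Matrix (Fin (d l)) (Fin (d l)) ℂ, (1 : Matrix (Fin (d l)) (Fin (d l)) ℂ) - Q l = R * (a l - bb l))
    (hAQ : ∀ l, (a l - bb l) * Q l = 0)
    (E : Matrix (∀ l, Fin (d l)) (∀ l, Fin (d l)) ℂ) (hE : E.PosSemidef)
    (htr : ((tens a - tens bb) * E).trace = 0) :
    tens Q * (tens P * E * tens P) * tens Q = tens P * E * tens P := by
  classical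
  choose R1 hR1 using hfac1
  choose R2 hR2 using hfac2
  set F := tens P * E * tens P with hF
  have hapsd : ∀ l, (a l).PosSemidef := fun l => by
    have := (hApsd l).add (hbpsd l); simpa using this
  have hAP : ∀ l, (a l - bb l) * P l = a l - bb l := fun l => by
    rw [Matrix.sub_mul, haP, hbP]
  set T : Fin L → Matrix (∀ l, Fin (d l)) (∀ l, Fin (d l)) ℂ :=
    fun l => tens (fun k => if k = l then a k - bb k
      else if (k : ℕ) < (l : ℕ) then bb k else a k) with hT
  have hΔ : tens a - tens bb = ∑ l : Fin L, T l := tens_telescope a bb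
  have hTpsd : ∀ l, (T l).PosSemidef := by
    intro l
    apply tens_posSemidef
    intro k
    split_ifs
    · exact hApsd k
    · exact hbpsd k
    · exact hapsd k
  have hTE : ∀ l : Fin L, T l * E = 0 := by
    have hsum : ∑ l : Fin L, (T l * E).trace = 0 := by
      rw [← Matrix.trace_sum, ← Finset.sum_mul, ← hΔ]; exact htr
    intro l
    have hnn : ∀ l ∈ Finset.univ (α := Fin L), 0 ≤ (T l * E).trace :=
      fun l _ => trace_mul_psd_nonneg (hTpsd l) hE
    have := (Finset.sum_eq_zero_iff_of_nonneg hnn).1 hsum l (Finset.mem_univ l)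
    exact mul_eq_zero_of_trace_mul_psd (hTpsd l) hE this
  have hTP : ∀ l, T l * tens P = T l := by
    intro l
    simp only [hT]
    rw [tens_mul]
    apply tens_congr
    intro k
    split_ifs
    · exact hAP k
    · exact hbP k
    · exact haP k
  have hTF : ∀ l, T l * F = 0 := by
    intro l
    rw [hF, ← Matrix.mul_assoc, ← Matrix.mul_assoc, hTP, hTE]
    simp
  have hmain : ∀ N : ℕ, tens (fun k => if (k : ℕ) < N then Q k else 1) * F = F := by
    intro N
    induction N with
    | zero =>
      have e : tens (fun k : Fin L => if (k : ℕ) < 0 then Q k else 1) =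
          tens (fun k => (1 : Matrix (Fin (d k)) (Fin (d k)) ℂ)) :=
        tens_congr fun k => if_neg (Nat.not_lt_zero _)
      rw [e, tens_one, Matrix.one_mul]
    | succ N ih =>
      by_cases hNL : N < L
      · obtain ⟨l, hlv⟩ : ∃ l : Fin L, (l : ℕ) = N := ⟨⟨N, hNL⟩, rfl⟩
        have hT'F : tens (fun k => if k = l then a k - bb k else a k) * F = 0 := by
          have e1 : tens (fun k => if k = l then a k - bb k else a k) *
              tens (fun k => if (k : ℕ) < N then Q k else 1) =
              T l * tens (fun k => if (k : ℕ) < N then Q k else 1) := by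
            simp only [hT]
            rw [tens_mul, tens_mul]
            apply tens_congr
            intro k
            by_cases hk : k = l
            · have hkv : (k : ℕ) = N := by rw [hk, hlv]
              simp only [if_pos hk, if_neg (show ¬ (k : ℕ) < N by omega)]
            · have hkv : (k : ℕ) ≠ N := fun h => hk (Fin.ext (by rw [h, hlv]))
              by_cases hkN : (k : ℕ) < N
              · simp only [if_neg hk, if_pos hkN, if_pos (show (k : ℕ) < (l : ℕ) by omega)]
                have h5 := hAQ k
                rw [Matrix.sub_mul, sub_eq_zero] at h5
                rw [h5]
              · simp only [if_neg hk, if_neg hkN,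
                  if_neg (show ¬ (k : ℕ) < (l : ℕ) by omega)]
          calc tens (fun k => if k = l then a k - bb k else a k) * F
              = tens (fun k => if k = l then a k - bb k else a k) *
                (tens (fun k => if (k : ℕ) < N then Q k else 1) * F) := by rw [ih]
            _ = (T l * tens (fun k => if (k : ℕ) < N then Q k else 1)) * F := by
                rw [← Matrix.mul_assoc, e1]
            _ = T l * (tens (fun k => if (k : ℕ) < N then Q k else 1) * F) := by
                rw [Matrix.mul_assoc]
            _ = 0 := by rw [ih, hTF]
        have hslA : tens (fun k => if k = l then a k - bb k else 1) * F = 0 := by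
          have e2 : tens (fun k => if k = l then a k - bb k else 1) * tens P =
              tens (fun k => if k = l then (1 : Matrix (Fin (d k)) (Fin (d k)) ℂ) else R1 k) *
                tens (fun k => if k = l then a k - bb k else a k) := by
            rw [tens_mul, tens_mul]
            apply tens_congr
            intro k
            by_cases hk : k = l
            · simp only [if_pos hk, Matrix.one_mul]
              exact hAP k
            · simp only [if_neg hk, Matrix.one_mul]
              exact hR1 k
          have e3 : tens (fun k => if k = l then a k - bb k else a k) * tens P =
              tens (fun k => if k = l then a k - bb k else a k) := by
            rw [tens_mul]
            apply tens_congr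
            intro k
            by_cases hk : k = l
            · simp only [if_pos hk]; exact hAP k
            · simp only [if_neg hk]; exact haP k
          calc tens (fun k => if k = l then a k - bb k else 1) * F
              = (tens (fun k => if k = l then a k - bb k else 1) * tens P) * E * tens P := by
                rw [hF]; noncomm_ring
            _ = (tens (fun k => if k = l then (1 : Matrix (Fin (d k)) (Fin (d k)) ℂ) else R1 k) *
                  tens (fun k => if k = l then a k - bb k else a k)) * E * tens P := by rw [e2]
            _ = tens (fun k => if k = l then (1 : Matrix (Fin (d k)) (Fin (d k)) ℂ) else R1 k) *
                  ((tens (fun k => if k = l then a k - bb k else a k) * tens P) * E * tens P) := by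
                rw [e3]; noncomm_ring
            _ = tens (fun k => if k = l then (1 : Matrix (Fin (d k)) (Fin (d k)) ℂ) else R1 k) *
                  (tens (fun k => if k = l then a k - bb k else a k) * F) := by
                rw [hF]; noncomm_ring
            _ = 0 := by rw [hT'F, Matrix.mul_zero]
        have hslQ : tens (fun k => if k = l then Q k else 1) * F = F := by
          have e4 : (1 : Matrix (∀ l, Fin (d l)) (∀ l, Fin (d l)) ℂ) -
              tens (fun k => if k = l then Q k else 1) =
              tens (fun k => if k = l then 1 - Q k else 1) := by
            rw [← tens_one (d := d)]
            rw [tens_slot_sub _ _ l (fun k hk => by rw [if_neg hk])]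
            apply tens_congr
            intro k
            by_cases hk : k = l
            · simp only [if_pos hk]
            · simp only [if_neg hk]
          have e5 : tens (fun k => if k = l then (1 : Matrix (Fin (d k)) (Fin (d k)) ℂ) - Q k else 1) =
              tens (fun k => if k = l then R2 k else 1) *
                tens (fun k => if k = l then a k - bb k else 1) := by
            rw [tens_mul]
            apply tens_congr
            intro k
            by_cases hk : k = l
            · simp only [if_pos hk]; exact hR2 k
            · simp only [if_neg hk, Matrix.one_mul]
          have h6 : ((1 : Matrix (∀ l, Fin (d l)) (∀ l, Fin (d l)) ℂ) -
              tens (fun k => if k = l then Q k else 1)) * F = 0 := by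
            rw [e4, e5, Matrix.mul_assoc, hslA, Matrix.mul_zero]
          rw [Matrix.sub_mul, Matrix.one_mul, sub_eq_zero] at h6
          exact h6.symm
        have e6 : tens (fun k => if (k : ℕ) < N + 1 then Q k else 1) =
            tens (fun k => if k = l then Q k else 1) *
              tens (fun k => if (k : ℕ) < N then Q k else 1) := by
          rw [tens_mul]
          apply tens_congr
          intro k
          by_cases hk : k = l
          · have hkv : (k : ℕ) = N := by rw [hk, hlv]
            simp only [if_pos hk, if_pos (show (k : ℕ) < N + 1 by omega),
              if_neg (show ¬ (k : ℕ) < N by omega), Matrix.mul_one]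
          · have hkv : (k : ℕ) ≠ N := fun h => hk (Fin.ext (by rw [h, hlv]))
            simp only [if_neg hk, Matrix.one_mul]
            by_cases h2 : (k : ℕ) < N
            · simp only [if_pos h2, if_pos (show (k : ℕ) < N + 1 by omega)]
            · simp only [if_neg h2, if_neg (show ¬ (k : ℕ) < N + 1 by omega)]
        rw [e6, Matrix.mul_assoc, ih, hslQ]
      · have e7 : tens (fun k : Fin L => if (k : ℕ) < N + 1 then Q k else 1) =
            tens (fun k => if (k : ℕ) < N then Q k else 1) := by
          apply tens_congr
          intro k
          have := k.isLt
          rw [if_pos (by omega), if_pos (by omega)]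
        rw [e7, ih]
  have hQF : tens Q * F = F := by
    have h8 := hmain L
    have e8 : tens (fun k : Fin L => if (k : ℕ) < L then Q k else 1) = tens Q :=
      tens_congr fun k => if_pos k.isLt
    rwa [e8] at h8
  have hPH : (tens P)ᴴ = tens P := by
    rw [tens_conjTranspose]; exact tens_congr hPherm
  have hQH : (tens Q)ᴴ = tens Q := by
    rw [tens_conjTranspose]; exact tens_congr hQherm
  have hFherm : Fᴴ = F := by
    rw [hF, Matrix.conjTranspose_mul, Matrix.conjTranspose_mul, hPH, hE.1, ← Matrix.mul_assoc]
  have hFQ : F * tens Q = F := by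
    have h9 := congrArg Matrix.conjTranspose hQF
    rwa [Matrix.conjTranspose_mul, hQH, hFherm] at h9
  rw [hQF, hFQ]
set_option maxHeartbeats 800000 in
/-- for E ∈ M_x⃗(⊗_l E^l), the compression Π E Π is invariant under
conjugation by ⊗_l Π_{x_l}^⊥, where Π = ⊗_l Π(E^l) is the support projection of
ρ₀ = ⊗_l ρ₀^l and Π_{x_l}^⊥ projects onto the kernel of C_{x_l} ρ₀^l − η_{x_l} ρ_{x_l}. -/
theorem stmt_16 {L : ℕ} (hL : 0 < L) {d n : Fin L → ℕ}
    (hd : ∀ l, 0 < d l) (hn : ∀ l, 0 < n l)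
    (η : ∀ l, Fin (n l) → ℝ)
    (ρ : ∀ l, Fin (n l) → Matrix (Fin (d l)) (Fin (d l)) ℂ)
    (hη : ∀ l i, 0 < η l i) (hηsum : ∀ l, ∑ i, η l i = 1)
    (hρ : ∀ l i, (ρ l i).PosSemidef) (hρtr : ∀ l i, (ρ l i).trace = 1)
    (ρ₀ : ∀ l, Matrix (Fin (d l)) (Fin (d l)) ℂ)
    (hρ₀ : ∀ l, ρ₀ l = ∑ i, (η l i : ℂ) • ρ l i)
    (C : ∀ l, Fin (n l) → ℝ)
    (hC : ∀ l i, IsLeast { q : ℝ | ((q : ℂ) • ρ₀ l - (η l i : ℂ) • ρ l i).PosSemidef } (C l i)) (x : ∀ l, Fin (n l))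
    (P : ∀ l, Matrix (Fin (d l)) (Fin (d l)) ℂ)
    (hPherm : ∀ l, (P l).IsHermitian) (hPidem : ∀ l, P l * P l = P l)
    (hPrange : ∀ l, LinearMap.range (P l).mulVecLin = LinearMap.range (ρ₀ l).mulVecLin)
    (Q : ∀ l, Matrix (Fin (d l)) (Fin (d l)) ℂ)
    (hQherm : ∀ l, (Q l).IsHermitian) (hQidem : ∀ l, Q l * Q l = Q l)
    (hQrange : ∀ l, LinearMap.range (Q l).mulVecLin =
      LinearMap.ker ((C l (x l) : ℂ) • ρ₀ l - (η l (x l) : ℂ) • ρ l (x l)).mulVecLin)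
    (E : Matrix (∀ l, Fin (d l)) (∀ l, Fin (d l)) ℂ) (hE : E.PosSemidef)
    (hEmc : ((((∏ l, C l (x l) : ℝ) : ℂ) • tens ρ₀ -
        ((∏ l, η l (x l) : ℝ) : ℂ) • tens (fun l => ρ l (x l))) * E).trace = 0) :
    tens Q * (tens P * E * tens P) * tens Q = tens P * E * tens P := by
  classical
  -- basic PSD facts
  have hbpsd : ∀ l, ((η l (x l) : ℂ) • ρ l (x l)).PosSemidef :=
    fun l => smul_posSemidef (hη l (x l)).le (hρ l (x l))
  have hApsd : ∀ l, ((C l (x l) : ℂ) • ρ₀ l - (η l (x l) : ℂ) • ρ l (x l)).PosSemidef :=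
    fun l => (hC l (x l)).1
  have hρ₀psd : ∀ l, (ρ₀ l).PosSemidef := by
    intro l
    rw [hρ₀ l]
    exact Finset.sum_induction _ (fun M : Matrix (Fin (d l)) (Fin (d l)) ℂ => M.PosSemidef) (fun A B hA hB => hA.add hB)
      Matrix.PosSemidef.zero (fun i _ => smul_posSemidef (hη l i).le (hρ l i))
  -- P absorption facts
  have hPρ₀ : ∀ l, P l * ρ₀ l = ρ₀ l := by
    intro l
    apply ext_mulVec'
    intro v
    have hmem : ρ₀ l *ᵥ v ∈ LinearMap.range (P l).mulVecLin := by
      rw [hPrange l]; exact ⟨v, rfl⟩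
    obtain ⟨u, hu⟩ := hmem
    rw [← Matrix.mulVec_mulVec]
    rw [Matrix.mulVecLin_apply] at hu
    rw [← hu, Matrix.mulVec_mulVec, hPidem l]
  have hρ₀P : ∀ l, ρ₀ l * P l = ρ₀ l := by
    intro l
    have h := congrArg Matrix.conjTranspose (hPρ₀ l)
    rwa [Matrix.conjTranspose_mul, (hρ₀psd l).1, hPherm l] at h
  -- kernel of ρ₀ is contained in kernel of P
  have hkerP : ∀ l (v : Fin (d l) → ℂ), ρ₀ l *ᵥ v = 0 → P l *ᵥ v = 0 := by
    intro l v hv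
    have hmem : P l *ᵥ v ∈ LinearMap.range (ρ₀ l).mulVecLin := by
      rw [← hPrange l]; exact ⟨v, rfl⟩
    obtain ⟨u, hu⟩ := hmem
    rw [Matrix.mulVecLin_apply] at hu
    have h1 : star (P l *ᵥ v) ⬝ᵥ (P l *ᵥ v) = 0 := by
      rw [Matrix.star_mulVec, Matrix.dotProduct_mulVec (star v ᵥ* (P l)ᴴ), hPherm l,
        Matrix.vecMul_vecMul, hPidem l, ← Matrix.dotProduct_mulVec, ← hu,
        Matrix.dotProduct_mulVec]
      have : star v ᵥ* ρ₀ l = 0 := by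
        have := congrArg star hv
        rwa [Matrix.star_mulVec, (hρ₀psd l).1, star_zero] at this
      rw [this, zero_dotProduct]
    exact dotProduct_star_self_eq_zero.mp h1
  -- ρ_x absorbs P
  have hρP : ∀ l, ρ l (x l) * P l = ρ l (x l) := by
    intro l
    have hρ₀N : ρ₀ l * (1 - P l) = 0 := by
      rw [Matrix.mul_sub, Matrix.mul_one, hρ₀P l, sub_self]
    have hD : (ρ₀ l - (η l (x l) : ℂ) • ρ l (x l)).PosSemidef := by
      have hsum : ρ₀ l - (η l (x l) : ℂ) • ρ l (x l) =
          ∑ i ∈ Finset.univ.erase (x l), (η l i : ℂ) • ρ l i := by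
        rw [hρ₀ l, ← Finset.add_sum_erase _ _ (Finset.mem_univ (x l))]
        rw [add_sub_cancel_left]
      rw [hsum]
      exact Finset.sum_induction _ (fun M : Matrix (Fin (d l)) (Fin (d l)) ℂ => M.PosSemidef) (fun A B hA hB => hA.add hB)
        Matrix.PosSemidef.zero (fun i _ => smul_posSemidef (hη l i).le (hρ l i))
    have hN : ρ l (x l) * (1 - P l) = 0 := by
      apply ext_mulVec'
      intro v
      set w := (1 - P l) *ᵥ v with hw
      have hw0 : ρ₀ l *ᵥ w = 0 := by
        rw [hw, Matrix.mulVec_mulVec, hρ₀N, Matrix.zero_mulVec]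
      have h2 : 0 ≤ star w ⬝ᵥ (((η l (x l) : ℂ) • ρ l (x l)) *ᵥ w) := (hbpsd l).dotProduct_mulVec_nonneg w
      have h1 : star w ⬝ᵥ (((η l (x l) : ℂ) • ρ l (x l)) *ᵥ w) ≤ 0 := by
        have h3 := hD.dotProduct_mulVec_nonneg w
        rw [Matrix.sub_mulVec, dotProduct_sub, hw0, dotProduct_zero, zero_sub] at h3
        exact neg_nonneg.mp h3
      have h4 : ((η l (x l) : ℂ) • ρ l (x l)) *ᵥ w = 0 :=
        ((hbpsd l).dotProduct_mulVec_zero_iff w).mp (le_antisymm h1 h2)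
      rw [Matrix.smul_mulVec, smul_eq_zero] at h4
      have h5 : ρ l (x l) *ᵥ w = 0 := by
        rcases h4 with h4 | h4
        · exact absurd h4 (by
            simp only [ne_eq, Complex.ofReal_eq_zero]
            exact (hη l (x l)).ne')
        · exact h4
      rw [Matrix.mulVec_mulVec] at h5
      rw [h5, Matrix.zero_mulVec]
    have := hN
    rw [Matrix.mul_sub, Matrix.mul_one, sub_eq_zero] at this
    exact this.symm
  -- absorption for a and bb
  have haP : ∀ l, ((C l (x l) : ℂ) • ρ₀ l) * P l = (C l (x l) : ℂ) • ρ₀ l := by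
    intro l; rw [Matrix.smul_mul, hρ₀P l]
  have hbP : ∀ l, ((η l (x l) : ℂ) • ρ l (x l)) * P l = (η l (x l) : ℂ) • ρ l (x l) := by
    intro l; rw [Matrix.smul_mul, hρP l]
  -- C is positive
  have htrρ₀ : ∀ l, (ρ₀ l).trace = 1 := by
    intro l
    rw [hρ₀ l, Matrix.trace_sum]
    simp only [Matrix.trace_smul, hρtr, smul_eq_mul, mul_one]
    rw [← Complex.ofReal_sum, hηsum l, Complex.ofReal_one]
  have hCpos : ∀ l, 0 < C l (x l) := by
    intro l
    have h0 : 0 ≤ ((C l (x l) : ℂ) • ρ₀ l - (η l (x l) : ℂ) • ρ l (x l)).trace := by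
      obtain ⟨B, hB⟩ := Matrix.posSemidef_iff_eq_transpose_mul_self.mp (hApsd l)
      rw [hB]
      exact trace_conjTranspose_mul_self_nonneg B
    rw [Matrix.trace_sub, Matrix.trace_smul, Matrix.trace_smul, htrρ₀ l, hρtr l (x l)] at h0
    simp only [smul_eq_mul, mul_one] at h0
    rw [← Complex.ofReal_sub] at h0
    have : (0:ℝ) ≤ C l (x l) - η l (x l) := by exact_mod_cast h0
    linarith [hη l (x l)]
  -- factorization facts
  have hfac1 : ∀ l, ∃ R : Matrix (Fin (d l)) (Fin (d l)) ℂ,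
      P l = R * ((C l (x l) : ℂ) • ρ₀ l) := by
    intro l
    apply exists_left_factor
    intro v hv
    rw [LinearMap.mem_ker, Matrix.mulVecLin_apply] at hv
    rw [LinearMap.mem_ker, Matrix.mulVecLin_apply]
    rw [Matrix.smul_mulVec, smul_eq_zero] at hv
    rcases hv with hv | hv
    · exact absurd hv (by
        simp only [ne_eq, Complex.ofReal_eq_zero]
        exact (hCpos l).ne')
    · exact hkerP l v hv
  have hfac2 : ∀ l, ∃ R : Matrix (Fin (d l)) (Fin (d l)) ℂ,
      (1 : Matrix (Fin (d l)) (Fin (d l)) ℂ) - Q l =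
        R * ((C l (x l) : ℂ) • ρ₀ l - (η l (x l) : ℂ) • ρ l (x l)) := by
    intro l
    apply exists_left_factor
    intro v hv
    have hmem : v ∈ LinearMap.range (Q l).mulVecLin := by
      rw [hQrange l]; exact hv
    obtain ⟨u, hu⟩ := hmem
    rw [Matrix.mulVecLin_apply] at hu
    rw [LinearMap.mem_ker, Matrix.mulVecLin_apply, Matrix.sub_mulVec, Matrix.one_mulVec]
    rw [← hu, Matrix.mulVec_mulVec, hQidem l, sub_self]
  have hAQ : ∀ l, ((C l (x l) : ℂ) • ρ₀ l - (η l (x l) : ℂ) • ρ l (x l)) * Q l = 0 := by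
    intro l
    apply ext_mulVec'
    intro v
    rw [← Matrix.mulVec_mulVec, Matrix.zero_mulVec]
    have hmem : Q l *ᵥ v ∈ LinearMap.ker
        ((C l (x l) : ℂ) • ρ₀ l - (η l (x l) : ℂ) • ρ l (x l)).mulVecLin := by
      rw [← hQrange l]; exact ⟨v, rfl⟩
    rw [LinearMap.mem_ker, Matrix.mulVecLin_apply] at hmem
    exact hmem
  -- rewrite the trace hypothesis
  have ha' : tens (fun l => (C l (x l) : ℂ) • ρ₀ l) =
      (((∏ l, C l (x l)) : ℝ) : ℂ) • tens ρ₀ := by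
    rw [tens_smul, Complex.ofReal_prod]
  have hb' : tens (fun l => (η l (x l) : ℂ) • ρ l (x l)) =
      (((∏ l, η l (x l)) : ℝ) : ℂ) • tens (fun l => ρ l (x l)) := by
    rw [tens_smul, Complex.ofReal_prod]
  have htr : ((tens (fun l => (C l (x l) : ℂ) • ρ₀ l) -
      tens (fun l => (η l (x l) : ℂ) • ρ l (x l))) * E).trace = 0 := by
    rw [ha', hb']; exact hEmc
  exact key_lemma (fun l => (C l (x l) : ℂ) • ρ₀ l) (fun l => (η l (x l) : ℂ) • ρ l (x l))
    P Q hbpsd hApsd haP hbP hPidem hPherm hQherm hfac1 hfac2 hAQ E hE htr
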